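/- Let A be an s×s complex matrix that is diagonalizable with all eigenvalues real and strictly positive, and let G be an m×m complex matrix that is diagonalizable with all eigenvalues having real part ≤ −1. Then there exists a constant C, independent of t, such that for every t ≥ 0 the matrix t·I_{sm} − (A ⊗ G) is invertible and ‖(t·I_{sm} − A ⊗ G)⁻¹‖ ≤ C, where ⊗ denotes the Kronecker product and ‖·‖ the L²-operator norm. -/

import Mathlib

open scoped Matrix.Norms.L2Operator Kronecker

open Matrix

/-- L² operator norm bound for a diagonal matrix with uniformly bounded entries. -/
lemma l2_opNorm_diagonal_le {n : Type*} [Fintype n] [DecidableEq n]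
    (v : n → ℂ) (c : ℝ) (hc : 0 ≤ c) (h : ∀ i, ‖v i‖ ≤ c) :
    ‖(Matrix.diagonal v : Matrix n n ℂ)‖ ≤ c := by
  rw [Matrix.l2_opNorm_def]
  refine ContinuousLinearMap.opNorm_le_bound _ hc fun x => ?_
  simp only [LinearEquiv.trans_apply, LinearMap.coe_toContinuousLinearMap']
  rw [Matrix.toEuclideanLin_apply]
  have hx : ∀ y : EuclideanSpace ℂ n, ‖y‖ = Real.sqrt (∑ i, ‖y i‖ ^ 2) := fun y =>
    EuclideanSpace.norm_eq y
  rw [hx, hx]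
  rw [← Real.sqrt_sq hc, ← Real.sqrt_mul (by positivity)]
  apply Real.sqrt_le_sqrt
  rw [Finset.mul_sum]
  apply Finset.sum_le_sum
  intro i _
  have : (WithLp.toLp 2 (Matrix.diagonal v *ᵥ x.ofLp)).ofLp i
      = v i * x.ofLp i := by
    simp [Matrix.mulVec_diagonal]
  rw [this, norm_mul, mul_pow]
  have h1 : ‖v i‖ ^ 2 ≤ c ^ 2 := pow_le_pow_left₀ (norm_nonneg _) (h i) 2
  nlinarith [norm_nonneg (x i), sq_nonneg ‖x i‖]

/-- **Uniform resolvent bound for `t·I − A ⊗ G`.**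
If `A` is diagonalizable with strictly positive real eigenvalues and `G` is diagonalizable with
all eigenvalues of real part `≤ −1`, then there is a constant `C`, independent of `t`, such that
for every `t ≥ 0` the matrix `t·I − A ⊗ G` is invertible with `‖(t·I − A ⊗ G)⁻¹‖ ≤ C`
(L²-operator norm). -/
theorem uniform_resolvent_bound_shifted_kronecker
    {s m : ℕ}
    (A P : Matrix (Fin s) (Fin s) ℂ) (hP : IsUnit P)
    (d : Fin s → ℝ) (hd : ∀ i, 0 < d i)
    (hA : A = P * Matrix.diagonal (fun i => (d i : ℂ)) * P⁻¹)
    (G Q : Matrix (Fin m) (Fin m) ℂ) (hQ : IsUnit Q)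
    (μ : Fin m → ℂ) (hμ : ∀ j, (μ j).re ≤ -1)
    (hG : G = Q * Matrix.diagonal μ * Q⁻¹) :
    ∃ C : ℝ, ∀ t : ℝ, 0 ≤ t →
      IsUnit ((t : ℂ) • (1 : Matrix (Fin s × Fin m) (Fin s × Fin m) ℂ) - A ⊗ₖ G) ∧
      ‖((t : ℂ) • (1 : Matrix (Fin s × Fin m) (Fin s × Fin m) ℂ) - A ⊗ₖ G)⁻¹‖ ≤ C := by
  classical
  rcases isEmpty_or_nonempty (Fin s × Fin m) with he | hne
  · -- degenerate case: empty index type, everything is trivial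
    have hsub : Subsingleton (Matrix (Fin s × Fin m) (Fin s × Fin m) ℂ) :=
      ⟨fun a b => by ext i; exact (he.false i).elim⟩
    refine ⟨0, fun t ht => ⟨@isUnit_of_subsingleton _ _ hsub _, ?_⟩⟩
    have h0 : ((t : ℂ) • (1 : Matrix (Fin s × Fin m) (Fin s × Fin m) ℂ) - A ⊗ₖ G)⁻¹ = 0 :=
      @Subsingleton.elim _ hsub _ _
    rw [h0, norm_zero]
  · have hs : Nonempty (Fin s) := ⟨hne.some.1⟩
    -- similarity matrix
    set R : Matrix (Fin s × Fin m) (Fin s × Fin m) ℂ := P ⊗ₖ Q with hRdef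
    have hRdet : IsUnit R.det := by
      rw [hRdef, Matrix.det_kronecker]
      exact (((Matrix.isUnit_iff_isUnit_det P).mp hP).pow _).mul
        (((Matrix.isUnit_iff_isUnit_det Q).mp hQ).pow _)
    have hRu : IsUnit R := (Matrix.isUnit_iff_isUnit_det R).mpr hRdet
    -- lower bound on eigenvalues of A
    obtain ⟨δ, hδpos, hδle⟩ : ∃ δ : ℝ, 0 < δ ∧ ∀ i, δ ≤ d i := by
      refine ⟨Finset.univ.inf' (Finset.univ_nonempty) d, ?_, fun i => Finset.inf'_le _ (by simp)⟩
      rw [Finset.lt_inf'_iff]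
      exact fun i _ => hd i
    refine ⟨‖R‖ * δ⁻¹ * ‖R⁻¹‖, fun t ht => ?_⟩
    set w : Fin s × Fin m → ℂ := fun p => (t : ℂ) - (d p.1 : ℂ) * μ p.2 with hwdef
    have hre : ∀ p, t + d p.1 ≤ (w p).re := by
      intro p
      have h1 : (w p).re = t - d p.1 * (μ p.2).re := by
        simp [hwdef, Complex.sub_re, Complex.mul_re]
      rw [h1]
      nlinarith [hμ p.2, hd p.1]
    have hwnorm : ∀ p, δ ≤ ‖w p‖ := fun p =>
      le_trans (le_trans (by nlinarith [hd p.1, hδle p.1, ht]) (hre p))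
        (Complex.re_le_norm _)
    have hw0 : ∀ p, w p ≠ 0 := fun p hp => by
      have := hwnorm p; rw [hp, norm_zero] at this; linarith
    -- the key similarity identity
    have hAG : A ⊗ₖ G = R * Matrix.diagonal (fun p : Fin s × Fin m =>
        (d p.1 : ℂ) * μ p.2) * R⁻¹ := by
      rw [hA, hG, Matrix.mul_kronecker_mul, Matrix.mul_kronecker_mul,
        Matrix.diagonal_kronecker_diagonal, ← Matrix.inv_kronecker, hRdef]
    have hone : (t : ℂ) • (1 : Matrix (Fin s × Fin m) (Fin s × Fin m) ℂ) =
        R * ((t : ℂ) • 1) * R⁻¹ := by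
      rw [Matrix.mul_smul, Matrix.mul_one, Matrix.smul_mul, Matrix.mul_nonsing_inv R hRdet]
    have hkey : (t : ℂ) • (1 : Matrix (Fin s × Fin m) (Fin s × Fin m) ℂ) - A ⊗ₖ G =
        R * Matrix.diagonal w * R⁻¹ := by
      rw [hAG, hone, ← Matrix.sub_mul, ← Matrix.mul_sub, Matrix.smul_one_eq_diagonal,
        ← Matrix.diagonal_sub]
    -- invertibility of the diagonal part
    have hDu : IsUnit (Matrix.diagonal w) := by
      rw [Matrix.isUnit_diagonal]
      exact ⟨⟨w, fun p => (w p)⁻¹, funext fun p => mul_inv_cancel₀ (hw0 p),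
        funext fun p => inv_mul_cancel₀ (hw0 p)⟩, rfl⟩
    have hDdet : IsUnit (Matrix.diagonal w).det := (Matrix.isUnit_iff_isUnit_det _).mp hDu
    have hDinv : (Matrix.diagonal w)⁻¹ = Matrix.diagonal (fun p => (w p)⁻¹) := by
      apply Matrix.inv_eq_right_inv
      rw [Matrix.diagonal_mul_diagonal]
      rw [show (fun p => w p * (w p)⁻¹) = fun _ => (1 : ℂ) from
        funext fun p => mul_inv_cancel₀ (hw0 p), Matrix.diagonal_one]
    have hRiu : IsUnit R⁻¹ := by
      rw [Matrix.isUnit_iff_isUnit_det, Matrix.det_nonsing_inv]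
      exact isUnit_ringInverse.mpr hRdet
    constructor
    · rw [hkey]
      exact (hRu.mul hDu).mul hRiu
    · -- inverse formula
      have hinv : ((t : ℂ) • (1 : Matrix (Fin s × Fin m) (Fin s × Fin m) ℂ) - A ⊗ₖ G)⁻¹ =
          R * (Matrix.diagonal w)⁻¹ * R⁻¹ := by
        rw [hkey]
        apply Matrix.inv_eq_right_inv
        have e1 : R⁻¹ * (R * ((Matrix.diagonal w)⁻¹ * R⁻¹)) =
            (Matrix.diagonal w)⁻¹ * R⁻¹ := by
          rw [← Matrix.mul_assoc, Matrix.nonsing_inv_mul R hRdet, Matrix.one_mul]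
        simp only [Matrix.mul_assoc]
        rw [e1, ← Matrix.mul_assoc (Matrix.diagonal w), Matrix.mul_nonsing_inv _ hDdet,
          Matrix.one_mul, Matrix.mul_nonsing_inv R hRdet]
      rw [hinv, hDinv]
      have hDnorm : ‖(Matrix.diagonal (fun p => (w p)⁻¹) :
          Matrix (Fin s × Fin m) (Fin s × Fin m) ℂ)‖ ≤ δ⁻¹ := by
        apply l2_opNorm_diagonal_le _ _ (by positivity)
        intro p
        rw [norm_inv]
        exact inv_anti₀ hδpos (hwnorm p)
      calc ‖R * Matrix.diagonal (fun p => (w p)⁻¹) * R⁻¹‖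
          ≤ ‖R * Matrix.diagonal (fun p => (w p)⁻¹)‖ * ‖R⁻¹‖ := Matrix.l2_opNorm_mul _ _
        _ ≤ ‖R‖ * ‖(Matrix.diagonal (fun p => (w p)⁻¹) :
              Matrix (Fin s × Fin m) (Fin s × Fin m) ℂ)‖ * ‖R⁻¹‖ :=
            mul_le_mul_of_nonneg_right (Matrix.l2_opNorm_mul _ _) (norm_nonneg _)
        _ ≤ ‖R‖ * δ⁻¹ * ‖R⁻¹‖ := by
            have := mul_le_mul_of_nonneg_left hDnorm (norm_nonneg R)
            exact mul_le_mul_of_nonneg_right this (norm_nonneg _)
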